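/- arXiv:2508.11587 — 2 statements merged into one kernel-verified Lean document; each statement's English description precedes it below -/
import Mathlib

section
/- For n >= 2, the total number of inversions over all Cayley permutations of length n is (n(n-1)/4)(Fub_n - Fub_{n-1}), i.e., 4 * sum_{w in C_n} inv(w) = n(n-1)(Fub_n - Fub_{n-1}). -/
/-- A Cayley permutation of length `n`, encoded with 0-indexed values (value `k : Fin n`
represents the positive integer `k+1`): if a value appears then all smaller values
appear. -/
def IsCayley (n : ℕ) (w : Fin n → Fin n) : Prop :=
  ∀ (i : Fin n) (v : Fin n), v ≤ w i → ∃ j, w j = v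

instance (n : ℕ) : DecidablePred (IsCayley n) := fun _ => by unfold IsCayley; infer_instance

/-- `Fub m` is the number of Cayley permutations of length `m` (the `m`-th Fubini
number). -/
def Fub (m : ℕ) : ℕ :=
  (Finset.univ.filter (fun w : Fin m → Fin m => IsCayley m w)).card

/-- The number of inversions of a word: pairs `(i,j)` with `i < j` and `w i > w j`. -/
def invCount (n : ℕ) (w : Fin n → Fin n) : ℕ :=
  (Finset.univ.filter (fun p : Fin n × Fin n => p.1 < p.2 ∧ w p.2 < w p.1)).card

open Finset

section Aux

lemma cayley_comp (n : ℕ) (w : Fin n → Fin n) (σ : Equiv.Perm (Fin n)) :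
    IsCayley n (w ∘ σ) ↔ IsCayley n w := by
  constructor <;> intro h i v hv
  · obtain ⟨j, hj⟩ := h (σ.symm i) v (by simpa using hv)
    exact ⟨σ j, hj⟩
  · obtain ⟨j, hj⟩ := h (σ i) v hv
    exact ⟨σ.symm j, by simpa using hj⟩

lemma comp_card (n : ℕ) (σ : Equiv.Perm (Fin n))
    (P Q : (Fin n → Fin n) → Prop) [DecidablePred P] [DecidablePred Q]
    (h : ∀ w, Q (w ∘ σ) ↔ P w) :
    (univ.filter Q).card = (univ.filter P).card := by
  apply Finset.card_bij' (fun w _ => w ∘ σ.symm) (fun w _ => w ∘ σ)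
  · intro w hw
    simp only [mem_filter, mem_univ, true_and] at hw ⊢
    apply (h _).mp
    have : (w ∘ ⇑σ.symm) ∘ ⇑σ = w := by ext x; simp
    rwa [this]
  · intro w hw
    simp only [mem_filter, mem_univ, true_and] at hw ⊢
    exact (h w).mpr hw
  · intro w _; ext x; simp
  · intro w _; ext x; simp

lemma lt_gt_card (n : ℕ) (i j : Fin n) :
    (univ.filter fun w : Fin n → Fin n => IsCayley n w ∧ w j < w i).card
      = (univ.filter fun w : Fin n → Fin n => IsCayley n w ∧ w i < w j).card := by
  apply comp_card n (Equiv.swap i j)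
  intro w
  simp only [Function.comp, Equiv.swap_apply_left, Equiv.swap_apply_right]
  rw [cayley_comp]

lemma exists_perm (n : ℕ) (i j a b : Fin n) (hij : i ≠ j) (hab : a ≠ b) :
    ∃ σ : Equiv.Perm (Fin n), σ a = i ∧ σ b = j := by
  set τ := Equiv.swap a i with hτ
  refine ⟨(Equiv.swap b (τ j)).trans τ, ?_, ?_⟩
  · have h1 : a ≠ b := hab
    have h2 : a ≠ τ j := by
      intro h
      apply hij
      have := congrArg τ h
      simpa [hτ] using this
    simp [Equiv.trans_apply, Equiv.swap_apply_of_ne_of_ne h1 (show a ≠ Equiv.swap a i j from h2), hτ]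
  · simp [Equiv.trans_apply, hτ]

lemma eq_card_indep (n : ℕ) (i j a b : Fin n) (hij : i ≠ j) (hab : a ≠ b) :
    (univ.filter fun w : Fin n → Fin n => IsCayley n w ∧ w i = w j).card
      = (univ.filter fun w : Fin n → Fin n => IsCayley n w ∧ w a = w b).card := by
  obtain ⟨σ, ha, hb⟩ := exists_perm n i j a b hij hab
  apply (comp_card n σ _ _ ?_).symm
  intro w
  simp only [Function.comp, ha, hb]
  rw [cayley_comp]

lemma values_lt (m : ℕ) (hm : 0 < m) (w : Fin (m+1) → Fin (m+1))
    (hC : IsCayley (m+1) w) (h01 : w ⟨0, by omega⟩ = w ⟨1, by omega⟩) (k : Fin (m+1)) :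
    (w k).val < m := by
  by_contra h
  push_neg at h
  have surj : Function.Surjective w := by
    intro v
    exact hC k v (by rw [Fin.le_def]; omega)
  have inj : Function.Injective w := Finite.injective_iff_surjective.mpr surj
  have := inj h01
  rw [Fin.ext_iff] at this
  simp at this

def dup (m : ℕ) (hm : 0 < m) (u : Fin m → Fin m) : Fin (m+1) → Fin (m+1) :=
  fun k => Fin.castSucc (u ⟨k.val - 1, by omega⟩)

lemma dup_val (m : ℕ) (hm : 0 < m) (u : Fin m → Fin m) (k : Fin (m+1)) :
    (dup m hm u k).val = (u ⟨k.val - 1, by omega⟩).val := rfl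

lemma dup_cayley (m : ℕ) (hm : 0 < m) (u : Fin m → Fin m) (hu : IsCayley m u) :
    IsCayley (m+1) (dup m hm u) := by
  intro i v hv
  rw [Fin.le_def, dup_val] at hv
  have hvm : v.val < m := lt_of_le_of_lt hv (u _).isLt
  obtain ⟨j, hj⟩ := hu ⟨i.val - 1, by omega⟩ ⟨v.val, hvm⟩ (by rw [Fin.le_def]; exact hv)
  refine ⟨⟨j.val + 1, by omega⟩, ?_⟩
  rw [Fin.ext_iff, dup_val]
  have : (⟨(⟨j.val + 1, by omega⟩ : Fin (m+1)).val - 1, by omega⟩ : Fin m) = j := by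
    rw [Fin.ext_iff]; simp
  rw [this, hj]

lemma dup_card (m : ℕ) (hm : 0 < m) :
    Fub m = (univ.filter fun w : Fin (m+1) → Fin (m+1) =>
      IsCayley (m+1) w ∧ w ⟨0, by omega⟩ = w ⟨1, by omega⟩).card := by
  unfold Fub
  apply Finset.card_bij (fun u _ => dup m hm u)
  · intro u hu
    simp only [mem_filter, mem_univ, true_and] at hu ⊢
    refine ⟨dup_cayley m hm u hu, ?_⟩
    rw [Fin.ext_iff, dup_val, dup_val]
    congr 1
  · intro u hu u' hu' h
    funext k
    have := congrFun h ⟨k.val + 1, by omega⟩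
    rw [Fin.ext_iff, dup_val, dup_val] at this
    simp only [Nat.add_sub_cancel] at this
    rw [Fin.ext_iff]
    simpa using this
  · intro w hw
    simp only [mem_filter, mem_univ, true_and] at hw
    obtain ⟨hC, h01⟩ := hw
    have hlt := values_lt m hm w hC h01
    have wcongr : ∀ a b : Fin (m+1), a.val = b.val → w a = w b :=
      fun a b h => congrArg w (Fin.ext h)
    refine ⟨fun k => ⟨(w ⟨k.val + 1, by omega⟩).val, hlt _⟩, ?_, ?_⟩
    · simp only [mem_filter, mem_univ, true_and]
      intro i v hv
      rw [Fin.le_def] at hv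
      simp only [] at hv
      obtain ⟨j, hj⟩ := hC ⟨i.val + 1, by omega⟩ ⟨v.val, by omega⟩
        (by rw [Fin.le_def]; exact hv)
      by_cases hj0 : j.val = 0
      · refine ⟨⟨0, hm⟩, ?_⟩
        rw [Fin.ext_iff]
        have e1 : w ⟨(⟨0, hm⟩ : Fin m).val + 1, by omega⟩ = w j := by
          rw [← h01]; exact wcongr _ _ (by simp; omega)
        simp only [e1, hj]
      · refine ⟨⟨j.val - 1, by omega⟩, ?_⟩
        rw [Fin.ext_iff]
        have e1 : w ⟨(⟨j.val - 1, by omega⟩ : Fin m).val + 1, by omega⟩ = w j :=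
          wcongr _ _ (by simp; omega)
        simp only [e1, hj]
    · funext k
      rw [Fin.ext_iff, dup_val]
      simp only []
      by_cases hk : k.val = 0
      · have e1 : w ⟨k.val - 1 + 1, by omega⟩ = w ⟨1, by omega⟩ := wcongr _ _ (by simp; omega)
        have e2 : w k = w ⟨0, by omega⟩ := wcongr _ _ hk
        rw [e1, e2, h01]
      · have e1 : w ⟨k.val - 1 + 1, by omega⟩ = w k := wcongr _ _ (by simp; omega)
        rw [e1]

lemma tri_card {α β : Type*} [LinearOrder β] (s : Finset α) (f g : α → β)
    [DecidablePred fun a => f a < g a] [DecidablePred fun a => f a = g a]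
    [DecidablePred fun a => g a < f a] :
    s.card = (s.filter fun a => f a < g a).card + (s.filter fun a => f a = g a).card
      + (s.filter fun a => g a < f a).card := by
  classical
  have h1 := Finset.card_filter_add_card_filter_not (s := s) (p := fun a => f a = g a)
  have h2 := Finset.card_filter_add_card_filter_not
    (s := s.filter fun a => ¬ f a = g a) (p := fun a => f a < g a)
  have e1 : (s.filter fun a => ¬ f a = g a).filter (fun a => f a < g a)
      = s.filter (fun a => f a < g a) := by
    ext a
    simp only [mem_filter]
    constructor
    · rintro ⟨⟨h, _⟩, h2⟩; exact ⟨h, h2⟩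
    · rintro ⟨h, h2⟩; exact ⟨⟨h, ne_of_lt h2⟩, h2⟩
  have e2 : (s.filter fun a => ¬ f a = g a).filter (fun a => ¬ f a < g a)
      = s.filter (fun a => g a < f a) := by
    ext a
    simp only [mem_filter]
    constructor
    · rintro ⟨⟨h, hne⟩, h2⟩
      exact ⟨h, lt_of_le_of_ne (le_of_not_gt h2) (fun hh => hne hh.symm)⟩
    · rintro ⟨h, h2⟩
      exact ⟨⟨h, fun hh => absurd hh.symm (ne_of_lt h2)⟩, not_lt_of_gt h2⟩
  rw [e1, e2] at h2
  omega

lemma diag_card (n : ℕ) :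
    (univ.filter fun p : Fin n × Fin n => p.1 = p.2).card = n := by
  have e : (univ.filter fun p : Fin n × Fin n => p.1 = p.2)
      = Finset.image (fun i : Fin n => (i, i)) univ := by
    ext p
    obtain ⟨a, b⟩ := p
    simp only [mem_filter, mem_univ, true_and, mem_image]
    constructor
    · intro h; exact ⟨a, by rw [show a = b from h]⟩
    · rintro ⟨i, h⟩
      rw [Prod.ext_iff] at h
      simp only [] at h
      rw [← h.1, ← h.2]
  rw [e, Finset.card_image_of_injective _ (fun a b h => (Prod.ext_iff.mp h).1)]
  simp

lemma swap_pair_card (n : ℕ) :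
    (univ.filter fun p : Fin n × Fin n => p.1 < p.2).card
      = (univ.filter fun p : Fin n × Fin n => p.2 < p.1).card := by
  refine Finset.card_bij' (fun p _ => Prod.swap p) (fun p _ => Prod.swap p) ?_ ?_ ?_ ?_
  · intro p hp; simp only [mem_filter, mem_univ, true_and] at hp ⊢; exact hp
  · intro p hp; simp only [mem_filter, mem_univ, true_and] at hp ⊢; exact hp
  · intro p _; simp
  · intro p _; simp

lemma pair_count (n : ℕ) (hn : 1 ≤ n) :
    n * (n - 1) = 2 * (univ.filter fun p : Fin n × Fin n => p.1 < p.2).card := by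
  have h := tri_card (univ : Finset (Fin n × Fin n)) Prod.fst Prod.snd
  rw [Finset.card_univ] at h
  simp only [Fintype.card_prod, Fintype.card_fin] at h
  rw [diag_card n, ← swap_pair_card n] at h
  obtain ⟨k, rfl⟩ : ∃ k, n = k + 1 := ⟨n - 1, by omega⟩
  simp only [Nat.add_sub_cancel]
  nlinarith [h]

lemma arith_helper (a b : ℕ) : 2 * a = a + b + a - b := by omega

lemma filter_and_card (n : ℕ) (q : (Fin n → Fin n) → Prop) [DecidablePred q] :
    ((univ.filter (fun w : Fin n → Fin n => IsCayley n w)).filter q)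
      = univ.filter (fun w => IsCayley n w ∧ q w) := by
  ext a
  simp only [Finset.mem_filter, Finset.mem_univ, true_and]

end Aux

/-- For `n ≥ 2`, four times the total number of inversions over all Cayley
permutations of length `n` equals `n(n-1)(Fub n - Fub (n-1))`. -/
theorem total_inversions_cayley (n : ℕ) (hn : 2 ≤ n) :
    4 * ∑ w ∈ Finset.univ.filter (fun w : Fin n → Fin n => IsCayley n w), invCount n w =
      n * (n - 1) * (Fub n - Fub (n - 1)) := by
  classical
  obtain ⟨m, rfl⟩ : ∃ m, n = m + 1 := ⟨n - 1, by omega⟩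
  have hm : 0 < m := by omega
  have step1 : ∑ w ∈ Finset.univ.filter (fun w : Fin (m+1) → Fin (m+1) => IsCayley (m+1) w),
        invCount (m+1) w
      = ∑ p ∈ Finset.univ.filter (fun p : Fin (m+1) × Fin (m+1) => p.1 < p.2),
          (univ.filter fun w : Fin (m+1) → Fin (m+1) =>
            IsCayley (m+1) w ∧ w p.2 < w p.1).card := by
    calc ∑ w ∈ Finset.univ.filter (fun w : Fin (m+1) → Fin (m+1) => IsCayley (m+1) w),
          invCount (m+1) w
        = ∑ w ∈ Finset.univ.filter (fun w : Fin (m+1) → Fin (m+1) => IsCayley (m+1) w),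
            ∑ p : Fin (m+1) × Fin (m+1), (if p.1 < p.2 ∧ w p.2 < w p.1 then 1 else 0) := by
          apply Finset.sum_congr rfl
          intro w _
          rw [invCount, Finset.card_filter]
      _ = ∑ p : Fin (m+1) × Fin (m+1),
            ∑ w ∈ Finset.univ.filter (fun w : Fin (m+1) → Fin (m+1) => IsCayley (m+1) w),
              (if p.1 < p.2 ∧ w p.2 < w p.1 then 1 else 0) := Finset.sum_comm
      _ = ∑ p : Fin (m+1) × Fin (m+1), (if p.1 < p.2 then
            (univ.filter fun w : Fin (m+1) → Fin (m+1) =>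
              IsCayley (m+1) w ∧ w p.2 < w p.1).card else 0) := by
          apply Finset.sum_congr rfl
          intro p _
          by_cases h : p.1 < p.2
          · simp only [h, if_true, true_and]
            rw [← Finset.card_filter, filter_and_card]
          · simp [h]
      _ = _ := by rw [Finset.sum_filter]
  rw [step1]
  have key : ∀ p ∈ Finset.univ.filter (fun p : Fin (m+1) × Fin (m+1) => p.1 < p.2),
      2 * (univ.filter fun w : Fin (m+1) → Fin (m+1) =>
            IsCayley (m+1) w ∧ w p.2 < w p.1).card = Fub (m + 1) - Fub m := by
    intro p hp
    rw [mem_filter] at hp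
    have hpne : p.1 ≠ p.2 := ne_of_lt hp.2
    have h0 : (0 : ℕ) < m + 1 := Nat.succ_pos m
    have h1 : (1 : ℕ) < m + 1 := Nat.succ_lt_succ hm
    have htri := tri_card (Finset.univ.filter (fun w : Fin (m+1) → Fin (m+1) => IsCayley (m+1) w))
      (fun w => w p.1) (fun w => w p.2)
    rw [filter_and_card, filter_and_card, filter_and_card] at htri
    have hlg := lt_gt_card (m + 1) p.1 p.2
    have heq : (univ.filter fun w : Fin (m+1) → Fin (m+1) =>
        IsCayley (m+1) w ∧ w p.1 = w p.2).card = Fub m := by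
      rw [eq_card_indep (m+1) p.1 p.2 ⟨0, h0⟩ ⟨1, h1⟩ hpne
        (by rw [Ne, Fin.ext_iff]; simp), ← dup_card m hm]
    have hfub : Fub (m + 1)
        = (Finset.univ.filter (fun w : Fin (m+1) → Fin (m+1) => IsCayley (m+1) w)).card := rfl
    rw [heq, ← hlg, ← hfub] at htri
    rw [htri]
    exact arith_helper _ _
  calc 4 * ∑ p ∈ Finset.univ.filter (fun p : Fin (m+1) × Fin (m+1) => p.1 < p.2),
          (univ.filter fun w : Fin (m+1) → Fin (m+1) =>
            IsCayley (m+1) w ∧ w p.2 < w p.1).card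
      = ∑ p ∈ Finset.univ.filter (fun p : Fin (m+1) × Fin (m+1) => p.1 < p.2),
          2 * (2 * (univ.filter fun w : Fin (m+1) → Fin (m+1) =>
            IsCayley (m+1) w ∧ w p.2 < w p.1).card) := by
        rw [Finset.mul_sum]
        apply Finset.sum_congr rfl
        intro p _
        ring
    _ = ∑ p ∈ Finset.univ.filter (fun p : Fin (m+1) × Fin (m+1) => p.1 < p.2),
          2 * (Fub (m + 1) - Fub m) := by
        apply Finset.sum_congr rfl
        intro p hp
        rw [key p hp]
    _ = (Finset.univ.filter (fun p : Fin (m+1) × Fin (m+1) => p.1 < p.2)).card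
          * (2 * (Fub (m + 1) - Fub m)) := by rw [Finset.sum_const, smul_eq_mul]
    _ = (2 * (Finset.univ.filter (fun p : Fin (m+1) × Fin (m+1) => p.1 < p.2)).card)
          * (Fub (m + 1) - Fub m) := by ring
    _ = ((m + 1) * m) * (Fub (m + 1) - Fub m) := by
        rw [← pair_count (m + 1) (Nat.succ_le_succ (Nat.zero_le m))]
        rw [Nat.add_sub_cancel]
    _ = (m + 1) * (m + 1 - 1) * (Fub (m + 1) - Fub (m + 1 - 1)) := by
        rw [Nat.add_sub_cancel]
end

section
/- Fix a word w of length n with content (c_1,...,c_l). The total number of ties over all distinct rearrangements of w equals (2/n) * sum_{i=1}^{l} multinomial(n; c_1,...,c_{i-1}, c_i - 2, 2, c_{i+1},...,c_l), where terms with c_i < 2 are zero. -/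
/-- The number of ties of a word: indices `i ∈ [n-1]` with `u i = u (i+1)`. -/
def tieCount (n : ℕ) (u : Fin n → ℕ) : ℕ :=
  (Finset.univ.filter
    (fun p : Fin n × Fin n => (p.1 : ℕ) + 1 = (p.2 : ℕ) ∧ u p.1 = u p.2)).card

open Finset Equiv

/-- Count of permutations fixing a function, as a filtered card. -/
lemma perm_stab_card {n l : ℕ} (f : Fin n → Fin l) :
    (Finset.univ.filter (fun σ : Perm (Fin n) => f ∘ σ = f)).card
      = ∏ k : Fin l, Nat.factorial (Finset.univ.filter (fun i => f i = k)).card := by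
  classical
  have := DomMulAct.stabilizer_card f
  simpa [Fintype.card_subtype] using this

/-- Invariance of the pair-count under relocation of the pair. -/
lemma pair_count_invariant {n : ℕ} (w : Fin n → ℕ) {a b a' b' : Fin n}
    (hab : a ≠ b) (hab' : a' ≠ b') :
    (Finset.univ.filter (fun σ : Perm (Fin n) => w (σ a) = w (σ b))).card
      = (Finset.univ.filter (fun σ : Perm (Fin n) => w (σ a') = w (σ b'))).card := by
  classical
  -- build π with π a = a', π b = b'
  set π₁ : Perm (Fin n) := Equiv.swap a a' with hπ₁
  have h1a : π₁ a = a' := Equiv.swap_apply_left a a'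
  set b₁ : Fin n := π₁ b with hb₁
  have hb₁a' : b₁ ≠ a' := by
    intro h
    exact hab (π₁.injective (by rw [h1a, ← h]))
  set π₂ : Perm (Fin n) := Equiv.swap b₁ b' with hπ₂
  set π : Perm (Fin n) := π₂ * π₁ with hπ
  have hπa : π a = a' := by
    simp only [hπ, Perm.mul_apply, h1a, hπ₂]
    exact Equiv.swap_apply_of_ne_of_ne hb₁a'.symm hab'
  have hπb : π b = b' := by
    simp only [hπ, Perm.mul_apply, ← hb₁, hπ₂]
    exact Equiv.swap_apply_left b₁ b'
  have hπa' : π⁻¹ a' = a := by rw [← hπa]; simp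
  have hπb' : π⁻¹ b' = b := by rw [← hπb]; simp
  apply Finset.card_bij' (fun σ _ => σ * π⁻¹) (fun σ _ => σ * π)
  · intro σ hσ
    simp only [Finset.mem_filter, Finset.mem_univ, true_and] at hσ ⊢
    simpa [Perm.mul_apply, hπa', hπb'] using hσ
  · intro σ hσ
    simp only [Finset.mem_filter, Finset.mem_univ, true_and] at hσ ⊢
    simpa [Perm.mul_apply, hπa, hπb] using hσ
  · intro σ _; simp [mul_assoc]
  · intro σ _; simp [mul_assoc]

/-- Let `w` be a word of length `n` whose distinct values, in increasing order, are
`v 0 < v 1 < ⋯ < v (l-1)`, with content `c k` = number of occurrences of `v k`.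
Then the total number of ties over all distinct rearrangements of `w` (its orbit
under the `S_n`-action permuting positions) equals
`(2/n) ∑_{k} multinomial(n; c_1, …, c_{k-1}, c_k - 2, 2, c_{k+1}, …, c_l)`,
where terms with `c_k < 2` are zero. -/
theorem total_ties_over_rearrangements (n l : ℕ) (w : Fin n → ℕ)
    (v : Fin l → ℕ) (hv : StrictMono v)
    (hrange : ∀ i : Fin n, ∃ k : Fin l, w i = v k)
    (hsurj : ∀ k : Fin l, ∃ i : Fin n, w i = v k)
    (c : Fin l → ℕ)
    (hc : ∀ k, c k = (Finset.univ.filter (fun i : Fin n => w i = v k)).card) :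
    n * ∑ u ∈ Finset.image (fun σ : Equiv.Perm (Fin n) => w ∘ σ) Finset.univ,
        tieCount n u =
      2 * ∑ k : Fin l,
        (if 2 ≤ c k then
          Nat.factorial n /
            ((c k - 2).factorial * Nat.factorial 2 *
              ∏ m ∈ Finset.univ.erase k, (c m).factorial)
        else 0) := by
  classical
  -- the "class" function
  set f : Fin n → Fin l := fun i => (hrange i).choose with hfdef
  have hf : ∀ i : Fin n, w i = v (f i) := fun i => (hrange i).choose_spec
  have hvinj : Function.Injective v := hv.injective
  have hwk : ∀ (i : Fin n) (k : Fin l), w i = v k ↔ f i = k := by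
    intro i k
    constructor
    · intro h; exact hvinj (by rw [← hf i, h])
    · intro h; rw [hf i, h]
  have hcf : ∀ k, c k = (Finset.univ.filter (fun i : Fin n => f i = k)).card := by
    intro k; rw [hc k]; congr 1; apply Finset.filter_congr; intro i _; simp [hwk i k]
  -- content sums to n
  have hsum : ∑ k, c k = n := by
    simp only [hcf]
    rw [← Finset.card_eq_sum_card_fiberwise (f := f) (t := Finset.univ)
      (fun x _ => Finset.mem_univ _)]
    simp
  -- notations
  set S : ℕ := ∑ u ∈ Finset.image (fun σ : Perm (Fin n) => w ∘ σ) Finset.univ,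
      tieCount n u with hS
  set P : ℕ := ∏ k, (c k).factorial with hP
  have hPpos : 0 < P := Finset.prod_pos (fun k _ => Nat.factorial_pos _)
  -- Step 2: orbit-stabilizer style sum
  have step2 : ∑ σ : Perm (Fin n), tieCount n (w ∘ σ) = P * S := by
    rw [Finset.sum_comp (tieCount n) (fun σ : Perm (Fin n) => w ∘ σ)]
    rw [hS, Finset.mul_sum]
    apply Finset.sum_congr rfl
    intro u hu
    rw [smul_eq_mul]
    congr 1
    obtain ⟨τ, _, hτ⟩ := Finset.mem_image.mp hu
    -- fiber over u has card equal to card of stabilizer of w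
    have hfib : (Finset.univ.filter (fun σ : Perm (Fin n) => w ∘ σ = u)).card
        = (Finset.univ.filter (fun σ : Perm (Fin n) => w ∘ σ = w)).card := by
      apply Finset.card_bij' (fun σ _ => σ * τ⁻¹) (fun σ _ => σ * τ)
      · intro σ hσ
        simp only [Finset.mem_filter, Finset.mem_univ, true_and] at hσ ⊢
        funext i
        have := congrFun hσ (τ⁻¹ i)
        simpa [Perm.mul_apply, ← hτ] using this
      · intro σ hσ
        simp only [Finset.mem_filter, Finset.mem_univ, true_and] at hσ ⊢
        funext i
        have := congrFun hσ (τ i)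
        simpa [Perm.mul_apply, ← hτ] using this
      · intro σ _; simp [mul_assoc]
      · intro σ _; simp [mul_assoc]
    have hstab : (Finset.univ.filter (fun σ : Perm (Fin n) => w ∘ σ = w)).card = P := by
      have heq : (Finset.univ.filter (fun σ : Perm (Fin n) => w ∘ σ = w))
          = (Finset.univ.filter (fun σ : Perm (Fin n) => f ∘ σ = f)) := by
        apply Finset.filter_congr
        intro σ _
        constructor
        · intro h; funext i
          exact (hwk (σ i) (f i)).mp (by rw [← hf i]; exact congrFun h i)
        · intro h; funext i
          rw [Function.comp_apply, hf (σ i), show f (σ i) = f i from congrFun h i, ← hf i]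
      rw [heq, perm_stab_card f, hP]
      exact Finset.prod_congr rfl fun k _ => by rw [hcf k]
    rw [hfib, hstab]
  -- the pair-count function
  set N : Fin n × Fin n → ℕ := fun p =>
    (Finset.univ.filter (fun σ : Perm (Fin n) => w (σ p.1) = w (σ p.2))).card with hN
  set Adj : Finset (Fin n × Fin n) :=
    Finset.univ.filter (fun p : Fin n × Fin n => (p.1 : ℕ) + 1 = (p.2 : ℕ)) with hAdj
  -- Step 3a: sum of tieCounts over all permutations
  have step3a : ∑ σ : Perm (Fin n), tieCount n (w ∘ σ) = ∑ p ∈ Adj, N p := by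
    have h1 : ∀ σ : Perm (Fin n), tieCount n (w ∘ σ)
        = ∑ p ∈ Adj, (if w (σ p.1) = w (σ p.2) then 1 else 0) := by
      intro σ
      rw [tieCount, Finset.card_filter, hAdj, Finset.sum_filter]
      apply Finset.sum_congr rfl
      intro p _
      by_cases hA : (p.1 : ℕ) + 1 = (p.2 : ℕ) <;> simp [hA, Function.comp]
    simp only [h1]
    rw [Finset.sum_comm]
    apply Finset.sum_congr rfl
    intro p _
    exact (Finset.card_filter _ _).symm
  -- each adjacent pair is distinct
  have hAdj_ne : ∀ p ∈ Adj, p.1 ≠ p.2 := by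
    intro p hp
    rw [hAdj, Finset.mem_filter] at hp
    intro h
    rw [h] at hp
    omega
  -- the set of distinct ordered pairs
  set D : Finset (Fin n × Fin n) := Finset.univ.offDiag with hD
  have hDmem : ∀ p : Fin n × Fin n, p ∈ D ↔ p.1 ≠ p.2 := by
    intro p
    rw [hD, Finset.mem_offDiag]
    simp
  -- T : number of equal-valued distinct pairs in w
  set T : ℕ := (Finset.univ.filter
      (fun p : Fin n × Fin n => p.1 ≠ p.2 ∧ w p.1 = w p.2)).card with hT
  -- Step 3c : sum over all distinct pairs
  have step3c : ∑ p ∈ D, N p = Nat.factorial n * T := by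
    have h1 : ∀ p, N p = ∑ σ : Perm (Fin n),
        (if w (σ p.1) = w (σ p.2) then 1 else 0) := by
      intro p
      exact Finset.card_filter _ _
    calc ∑ p ∈ D, N p
        = ∑ p ∈ D, ∑ σ : Perm (Fin n), (if w (σ p.1) = w (σ p.2) then 1 else 0) := by
          exact Finset.sum_congr rfl fun p _ => h1 p
      _ = ∑ σ : Perm (Fin n), ∑ p ∈ D, (if w (σ p.1) = w (σ p.2) then 1 else 0) :=
          Finset.sum_comm
      _ = ∑ _σ : Perm (Fin n), T := by
          apply Finset.sum_congr rfl
          intro σ _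
          rw [← Finset.card_filter]
          rw [hT]
          apply Finset.card_bij' (fun p _ => ((σ p.1 : Fin n), (σ p.2 : Fin n)))
            (fun p _ => ((σ⁻¹ p.1 : Fin n), (σ⁻¹ p.2 : Fin n)))
          · intro p hp
            simp only [Finset.mem_filter, Finset.mem_univ, true_and, hDmem] at hp ⊢
            exact ⟨fun h => hp.1 (σ.injective h), hp.2⟩
          · intro p hp
            simp only [Finset.mem_filter, Finset.mem_univ, true_and, hDmem] at hp ⊢
            refine ⟨fun h => hp.1 (σ⁻¹.injective h), ?_⟩
            simpa using hp.2
          · intro p _; simp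
          · intro p _; simp
      _ = Nat.factorial n * T := by
          rw [Finset.sum_const, smul_eq_mul, Finset.card_univ, Fintype.card_perm,
            Fintype.card_fin]
  -- Step 3 : n * (sum over adjacent pairs) = sum over all distinct pairs
  have step3 : n * ∑ p ∈ Adj, N p = ∑ p ∈ D, N p := by
    rcases lt_or_ge n 2 with hn | hn
    · -- n ≤ 1 : both sides are zero
      have hAdjE : Adj = ∅ := by
        rw [Finset.eq_empty_iff_forall_notMem]
        intro p hp
        have h2 := hAdj_ne p hp
        rw [hAdj, Finset.mem_filter] at hp
        have : (p.2 : ℕ) < n := p.2.isLt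
        omega
      have hDE : D = ∅ := by
        rw [Finset.eq_empty_iff_forall_notMem]
        intro p hp
        rw [hDmem] at hp
        apply hp
        have h1 : (p.1 : ℕ) < n := p.1.isLt
        have h2 : (p.2 : ℕ) < n := p.2.isLt
        exact Fin.ext (by omega)
      rw [hAdjE, hDE]; simp
    · -- n ≥ 2 : both sides equal (a multiple of) a constant
      set p₀ : Fin n × Fin n := (⟨0, by omega⟩, ⟨1, by omega⟩) with hp₀
      have hp₀ne : p₀.1 ≠ p₀.2 := by
        intro h
        have := congrArg Fin.val h
        simp [hp₀] at this
      have hconstAdj : ∀ p ∈ Adj, N p = N p₀ :=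
        fun p hp => pair_count_invariant w (hAdj_ne p hp) hp₀ne
      have hconstD : ∀ p ∈ D, N p = N p₀ :=
        fun p hp => pair_count_invariant w ((hDmem p).mp hp) hp₀ne
      have hAdjcard : Adj.card = n - 1 := by
        rw [← Finset.card_range (n-1)]
        apply Finset.card_bij' (fun (p : Fin n × Fin n) (_ : p ∈ Adj) => (p.1 : ℕ))
          (fun (j : ℕ) (hj : j ∈ Finset.range (n-1)) =>
            ((⟨j, by have := Finset.mem_range.mp hj; omega⟩ : Fin n),
             (⟨j+1, by have := Finset.mem_range.mp hj; omega⟩ : Fin n)))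
        case hi =>
          intro p hp
          rw [hAdj, Finset.mem_filter] at hp
          have : (p.2 : ℕ) < n := p.2.isLt
          rw [Finset.mem_range]
          omega
        case hj =>
          intro j hj
          rw [hAdj, Finset.mem_filter]
          exact ⟨Finset.mem_univ _, rfl⟩
        case left_inv =>
          intro p hp
          rw [hAdj, Finset.mem_filter] at hp
          exact Prod.ext (Fin.ext rfl) (Fin.ext (by simp [hp.2]))
        case right_inv =>
          intro j hj
          rfl
      have hDcard : D.card = n * n - n := by
        rw [hD, Finset.offDiag_card, Finset.card_univ, Fintype.card_fin]
      rw [Finset.sum_congr rfl hconstAdj, Finset.sum_congr rfl hconstD,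
        Finset.sum_const, Finset.sum_const, hAdjcard, hDcard, smul_eq_mul, smul_eq_mul]
      have : n * ((n-1) * N p₀) = (n * (n-1)) * N p₀ := by ring
      rw [this, Nat.mul_sub_one]
  -- T equals sum of c_k (c_k - 1)
  have hTvalue : T = ∑ k, c k * (c k - 1) := by
    rw [hT]
    rw [Finset.card_eq_sum_card_fiberwise (f := fun p : Fin n × Fin n => f p.1)
      (t := Finset.univ) (fun x _ => Finset.mem_univ _)]
    apply Finset.sum_congr rfl
    intro k _
    have hset : ((Finset.univ.filter
        (fun p : Fin n × Fin n => p.1 ≠ p.2 ∧ w p.1 = w p.2)).filter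
        (fun p => f p.1 = k))
        = (Finset.univ.filter (fun i : Fin n => w i = v k)).offDiag := by
      ext p
      simp only [Finset.mem_filter, Finset.mem_univ, true_and, Finset.mem_offDiag]
      constructor
      · rintro ⟨⟨hne, heq⟩, hk⟩
        have h1 : w p.1 = v k := (hwk p.1 k).mpr hk
        exact ⟨h1, by rw [← heq]; exact h1, hne⟩
      · rintro ⟨h1, h2, hne⟩
        exact ⟨⟨hne, by rw [h1, h2]⟩, (hwk p.1 k).mp h1⟩
    rw [hset, Finset.offDiag_card, ← hc k, Nat.mul_sub_one]
  -- Assemble the left side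
  have hL : n * (P * S) = Nat.factorial n * ∑ k, c k * (c k - 1) := by
    rw [← step2, step3a, step3, step3c, hTvalue]
  -- Right side : P * RHS = n! * sum
  have hR : P * (2 * ∑ k : Fin l,
        (if 2 ≤ c k then
          Nat.factorial n /
            ((c k - 2).factorial * Nat.factorial 2 *
              ∏ m ∈ Finset.univ.erase k, (c m).factorial)
        else 0)) = Nat.factorial n * ∑ k, c k * (c k - 1) := by
    rw [Finset.mul_sum, Finset.mul_sum, Finset.mul_sum]
    apply Finset.sum_congr rfl
    intro k _
    by_cases hk : 2 ≤ c k
    · rw [if_pos hk]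
      set Dk : ℕ := (c k - 2).factorial * Nat.factorial 2 *
          ∏ m ∈ Finset.univ.erase k, (c m).factorial with hDk
      -- divisibility
      have hdvd : Dk ∣ Nat.factorial n := by
        have key := Nat.prod_factorial_dvd_factorial_sum Finset.univ
          (fun o : Option (Fin l) => o.elim 2 (fun m => if m = k then c k - 2 else c m))
        have hsum' : ∑ o : Option (Fin l),
            (o.elim 2 (fun m => if m = k then c k - 2 else c m)) = n := by
          rw [Fintype.sum_option]
          simp only [Option.elim]
          rw [← Finset.add_sum_erase _ _ (Finset.mem_univ k), if_pos rfl]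
          rw [Finset.sum_congr rfl (fun m hm => by
            rw [if_neg (Finset.mem_erase.mp hm).1])]
          rw [← Nat.add_assoc, Nat.add_sub_cancel' hk, ← hsum]
          exact Finset.add_sum_erase _ c (Finset.mem_univ k)
        have hprod' : ∏ o : Option (Fin l),
            Nat.factorial (o.elim 2 (fun m => if m = k then c k - 2 else c m)) = Dk := by
          rw [Fintype.prod_option]
          simp only [Option.elim]
          rw [← Finset.mul_prod_erase _ _ (Finset.mem_univ k), if_pos rfl]
          rw [Finset.prod_congr rfl (fun m hm => by
            rw [if_neg (Finset.mem_erase.mp hm).1])]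
          rw [hDk]
          ring
        rw [hsum', hprod'] at key
        exact key
      -- factorial decomposition : c k ! = c k * (c k - 1) * (c k - 2)!
      obtain ⟨d, hd⟩ : ∃ d, c k = d + 2 := ⟨c k - 2, by omega⟩
      have hfact : (c k).factorial = c k * (c k - 1) * (c k - 2).factorial := by
        rw [hd]
        show (d + 2).factorial = (d + 2) * (d + 2 - 1) * (d + 2 - 2).factorial
        rw [show d + 2 - 1 = d + 1 from rfl, show d + 2 - 2 = d from rfl]
        rw [Nat.factorial_succ, Nat.factorial_succ]
        ring
      have hPsplit : P = (c k).factorial * ∏ m ∈ Finset.univ.erase k, (c m).factorial := by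
        rw [hP, ← Finset.mul_prod_erase _ _ (Finset.mem_univ k)]
      rw [hPsplit, hfact]
      have h2fact : Nat.factorial 2 = 2 := rfl
      calc c k * (c k - 1) * (c k - 2).factorial *
            (∏ m ∈ Finset.univ.erase k, (c m).factorial) *
            (2 * (Nat.factorial n / Dk))
          = c k * (c k - 1) * (Dk * (Nat.factorial n / Dk)) := by
            rw [hDk, h2fact]; ring
        _ = c k * (c k - 1) * Nat.factorial n := by rw [Nat.mul_div_cancel' hdvd]
        _ = Nat.factorial n * (c k * (c k - 1)) := by ring
    · rw [if_neg hk]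
      have : c k * (c k - 1) = 0 := by
        have h01 : c k = 0 ∨ c k = 1 := by omega
        rcases h01 with h | h <;> simp [h]
      rw [this]
      simp
  -- conclude
  have hfinal : P * (n * S) = P * (2 * ∑ k : Fin l,
        (if 2 ≤ c k then
          Nat.factorial n /
            ((c k - 2).factorial * Nat.factorial 2 *
              ∏ m ∈ Finset.univ.erase k, (c m).factorial)
        else 0)) := by
    rw [hR, ← hL]
    ring
  exact Nat.eq_of_mul_eq_mul_left hPpos hfinal
end
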